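/- Let F_q be a finite field, 1 ≤ k < n, A ∈ M_k(F_q) and C ∈ M_{n−k,k}(F_q). The n × k polynomial matrix [xI_k − A; −C] is unimodular over F_q[x] (i.e., every common divisor of its k × k minors is a unit) if and only if the (n−k)k × k block matrix obtained by stacking C, CA, CA^2, …, CA^{k−1} has rank k. -/

import Mathlib

set_option linter.unusedSectionVars false in
set_option maxHeartbeats 1000000

open Matrix Polynomial

/-- An `m × k` polynomial matrix (with `#m ≥ k`) is *unimodular* if every common divisor
of its `k × k` minors is a unit (equivalently, all its invariant factors equal `1`). -/
def Matrix.Unimodular {F : Type*} [Field F] {m : Type*} [Fintype m] [DecidableEq m] {k : ℕ}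
    (M : Matrix m (Fin k) (Polynomial F)) : Prop :=
  ∀ g : Polynomial F,
    (∀ f : Fin k → m, Function.Injective f → g ∣ (M.submatrix f id).det) → IsUnit g

/-- The `(k + r) × k` polynomial matrix `[xI_k − A; −C]`. -/
noncomputable def xIminusAC {F : Type*} [Field F] {k r : ℕ} (A : Matrix (Fin k) (Fin k) F)
    (C : Matrix (Fin r) (Fin k) F) : Matrix (Fin k ⊕ Fin r) (Fin k) (Polynomial F) :=
  Matrix.of fun i j =>
    Sum.elim (fun i' => (if i' = j then Polynomial.X else 0) - Polynomial.C (A i' j))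
      (fun i'' => - Polynomial.C (C i'' j)) i

section Aux

variable {L : Type*} [Field L] {m : Type*} [Fintype m] [DecidableEq m] {k r : ℕ}

theorem PBH.mulVec_eq_zero_of_det (M : Matrix m (Fin k) L)
    (h : ∃ f : Fin k → m, Function.Injective f ∧ (M.submatrix f id).det ≠ 0) :
    ∀ v : Fin k → L, M.mulVec v = 0 → v = 0 := by
  obtain ⟨f, hf, hdet⟩ := h
  intro v hv
  by_contra hv0
  apply hdet
  rw [← Matrix.exists_mulVec_eq_zero_iff]
  refine ⟨v, hv0, ?_⟩
  have : (M.submatrix f id).mulVec v = fun i => M.mulVec v (f i) := by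
    funext i
    simp [Matrix.mulVec, dotProduct, Matrix.submatrix]
  rw [this, hv]
  rfl

theorem PBH.rank_eq_iff_ker (M : Matrix m (Fin k) L) :
    M.rank = k ↔ ∀ v : Fin k → L, M.mulVec v = 0 → v = 0 := by
  have h := M.mulVecLin.finrank_range_add_finrank_ker
  have hdom : Module.finrank L (Fin k → L) = k := by simp
  rw [hdom] at h
  unfold Matrix.rank
  constructor
  · intro hr v hv
    have hker : LinearMap.ker M.mulVecLin = ⊥ := by
      have : Module.finrank L (LinearMap.ker M.mulVecLin) = 0 := by omega
      exact Submodule.finrank_eq_zero.mp this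
    have := LinearMap.ker_eq_bot.mp hker
    exact this (a₂ := 0) (by simpa [Matrix.mulVecLin_apply] using hv)
  · intro hv
    have hker : LinearMap.ker M.mulVecLin = ⊥ := by
      rw [LinearMap.ker_eq_bot']
      intro v hvv
      exact hv v (by simpa [Matrix.mulVecLin_apply] using hvv)
    have : Module.finrank L (LinearMap.ker M.mulVecLin) = 0 := by
      rw [hker]; simp
    omega

theorem PBH.exists_det_ne_zero_of_ker (M : Matrix m (Fin k) L)
    (h : ∀ v : Fin k → L, M.mulVec v = 0 → v = 0) :
    ∃ f : Fin k → m, Function.Injective f ∧ (M.submatrix f id).det ≠ 0 := by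
  classical
  have hrank : M.rank = k := (PBH.rank_eq_iff_ker M).mpr h
  have hspan : Submodule.span L (Set.range M) = ⊤ := by
    have h1 : M.rank = Set.finrank L (Set.range M) := M.rank_eq_finrank_span_row
    apply Submodule.eq_top_of_finrank_eq
    rw [show Module.finrank L ↥(Submodule.span L (Set.range M)) = Set.finrank L (Set.range M) from rfl,
      ← h1, hrank]
    simp
  obtain ⟨b, hbsub, hbspan, hbind⟩ := exists_linearIndependent L (Set.range M)
  rw [hspan] at hbspan
  have hbfin : b.Finite := Set.Finite.subset (Set.finite_range M) hbsub
  haveI := hbfin.fintype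
  have hcard : Fintype.card b = k := by
    have := linearIndependent_iff_card_eq_finrank_span.mp hbind
    rw [this, Set.finrank]
    rw [Subtype.range_coe, hbspan]
    simp
  have hex : ∀ x : b, ∃ i : m, M i = (x : Fin k → L) := fun x => hbsub x.2
  choose g hg using hex
  have hginj : Function.Injective g := by
    intro x y hxy
    apply Subtype.ext
    rw [← hg x, ← hg y, hxy]
  let e : Fin k ≃ b := (Fintype.equivFinOfCardEq hcard).symm
  refine ⟨g ∘ e, hginj.comp e.injective, ?_⟩
  intro hdet
  obtain ⟨v, hv0, hv⟩ := (Matrix.exists_vecMul_eq_zero_iff).mpr hdet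
  apply hv0
  have hrows : ∀ i, (M.submatrix (g ∘ e) id) i = ((e i : Fin k → L)) := by
    intro i; funext j; simp [Matrix.submatrix, hg (e i)]
  have hindep : LinearIndependent L (fun i : Fin k => ((e i : Fin k → L))) :=
    hbind.comp e e.injective
  have := Fintype.linearIndependent_iff.mp hindep v ?_
  · funext i; exact this i
  · funext j
    have h2 := congrFun hv j
    simp only [Matrix.vecMul, dotProduct, Pi.zero_apply] at h2
    simp only [Finset.sum_apply, Pi.smul_apply, smul_eq_mul, Pi.zero_apply]
    rw [← h2]
    refine Finset.sum_congr rfl fun i _ => ?_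
    rw [← congrFun (hrows i) j]

theorem PBH.charpoly_pow_eq (A : Matrix (Fin k) (Fin k) L) :
    A ^ k = -∑ i ∈ Finset.range k, A.charpoly.coeff i • A ^ i := by
  have h0 := A.aeval_self_charpoly
  have hdeg : A.charpoly.natDegree = k := by
    simpa using A.charpoly_natDegree_eq_dim
  have h1 : A.charpoly.coeff k = 1 := by
    have := A.charpoly_monic.coeff_natDegree
    rwa [hdeg] at this
  rw [Polynomial.aeval_eq_sum_range, hdeg, Finset.sum_range_succ, h1, one_smul] at h0
  linear_combination (norm := abel) h0

theorem PBH.pow_mulVec_mem_span (A : Matrix (Fin k) (Fin k) L) (v : Fin k → L) :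
    ∀ i : ℕ, (A ^ i) *ᵥ v ∈ Submodule.span L (Set.range fun j : Fin k => (A ^ (j : ℕ)) *ᵥ v) := by
  rcases Nat.eq_zero_or_pos k with rfl | hk
  · intro i
    have : (A ^ i) *ᵥ v = 0 := Subsingleton.elim _ _
    rw [this]; exact Submodule.zero_mem _
  intro i
  induction i using Nat.strong_induction_on with
  | _ i ih =>
    rcases lt_or_ge i k with hik | hik
    · exact Submodule.subset_span ⟨⟨i, hik⟩, rfl⟩
    · have hi : i = (i - k) + k := by omega
      rw [hi, pow_add, ← Matrix.mulVec_mulVec, PBH.charpoly_pow_eq A]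
      have hsum : (-∑ j ∈ Finset.range k, A.charpoly.coeff j • A ^ j) *ᵥ v
          = -∑ j ∈ Finset.range k, A.charpoly.coeff j • ((A ^ j) *ᵥ v) := by
        funext x
        simp only [Matrix.mulVec, dotProduct, Matrix.neg_apply, Matrix.sum_apply,
          Matrix.smul_apply, smul_eq_mul, Pi.neg_apply, Finset.sum_apply, Pi.smul_apply,
          neg_mul, Finset.sum_mul, Finset.mul_sum, Finset.sum_neg_distrib]
        rw [Finset.sum_comm]
        exact neg_inj.mpr (Finset.sum_congr rfl fun _ _ => Finset.sum_congr rfl fun _ _ => by ring)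
      rw [hsum, Matrix.mulVec_neg]
      have h2 : A ^ (i - k) *ᵥ (∑ j ∈ Finset.range k, A.charpoly.coeff j • ((A ^ j) *ᵥ v))
          = ∑ j ∈ Finset.range k, A.charpoly.coeff j • ((A ^ (i - k + j)) *ᵥ v) := by
        rw [← Matrix.mulVecLin_apply, map_sum]
        refine Finset.sum_congr rfl fun j hj => ?_
        rw [_root_.map_smul, Matrix.mulVecLin_apply, Matrix.mulVec_mulVec, ← pow_add]
      rw [h2]
      refine Submodule.neg_mem _ (Submodule.sum_mem _ fun j hj => Submodule.smul_mem _ _ ?_)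
      refine ih _ ?_
      have := Finset.mem_range.mp hj
      omega

theorem PBH.pbh_aux [IsAlgClosed L] (A : Matrix (Fin k) (Fin k) L) (C : Matrix (Fin r) (Fin k) L) :
    (∀ (lam : L) (v : Fin k → L), A *ᵥ v = lam • v → C *ᵥ v = 0 → v = 0) ↔
    (∀ v : Fin k → L, (∀ j : Fin k, (C * A ^ (j : ℕ)) *ᵥ v = 0) → v = 0) := by
  constructor
  · intro hL v hv
    by_contra hv0
    rcases Nat.eq_zero_or_pos k with hk0 | hk
    · exact hv0 (funext fun i => absurd i.2 (by omega))
    set U : Submodule L (Fin k → L) :=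
      Submodule.span L (Set.range fun j : Fin k => (A ^ (j : ℕ)) *ᵥ v) with hU
    have hvU : v ∈ U := by
      have := Submodule.subset_span (R := L)
        (s := Set.range fun j : Fin k => (A ^ (j : ℕ)) *ᵥ v) ⟨⟨0, hk⟩, rfl⟩
      simpa [Matrix.one_mulVec] using this
    have hInv : ∀ x ∈ U, A.mulVecLin x ∈ U := by
      intro x hx
      have hmap : U.map A.mulVecLin ≤ U := by
        rw [hU, Submodule.map_span, Submodule.span_le]
        rintro _ ⟨_, ⟨j, rfl⟩, rfl⟩
        have := PBH.pow_mulVec_mem_span A v ((j : ℕ) + 1)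
        simpa [Matrix.mulVecLin_apply, Matrix.mulVec_mulVec, pow_succ'] using this
      exact hmap ⟨x, hx, rfl⟩
    have hCU : ∀ x ∈ U, C *ᵥ x = 0 := by
      intro x hx
      have hle : U ≤ LinearMap.ker C.mulVecLin := by
        rw [hU, Submodule.span_le]
        rintro _ ⟨j, rfl⟩
        simp only [SetLike.mem_coe, LinearMap.mem_ker, Matrix.mulVecLin_apply]
        rw [Matrix.mulVec_mulVec]
        exact hv j
      simpa [Matrix.mulVecLin_apply] using hle hx
    haveI : Nontrivial U := nontrivial_of_ne ⟨v, hvU⟩ 0 (by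
      intro hcon
      exact hv0 (by simpa using congrArg Subtype.val hcon))
    obtain ⟨μ, hμ⟩ := Module.End.exists_eigenvalue (A.mulVecLin.restrict hInv)
    obtain ⟨w, hw⟩ := hμ.exists_hasEigenvector
    have hwv : A *ᵥ (w : Fin k → L) = μ • (w : Fin k → L) := by
      have := hw.apply_eq_smul
      have h2 := congrArg Subtype.val this
      rw [LinearMap.restrict_coe_apply] at h2
      simpa [Matrix.mulVecLin_apply] using h2
    have := hL μ w hwv (hCU w w.2)
    exact hw.right (by simpa using Subtype.ext this)
  · intro hR lam v hAv hCv
    apply hR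
    intro j
    have hpow : ∀ i : ℕ, (A ^ i) *ᵥ v = lam ^ i • v := by
      intro i
      induction i with
      | zero => simp [Matrix.one_mulVec]
      | succ i ih =>
        rw [pow_succ', ← Matrix.mulVec_mulVec, ih, Matrix.mulVec_smul, hAv,
          smul_smul, ← pow_succ]
    rw [← Matrix.mulVec_mulVec, hpow, Matrix.mulVec_smul, hCv, smul_zero]

end Aux

theorem unimodular_iff_observability_matrix_full_rank
    {F : Type*} [Field F] [Fintype F] (n k : ℕ) (hk : 1 ≤ k) (hkn : k < n)
    (A : Matrix (Fin k) (Fin k) F) (C : Matrix (Fin (n - k)) (Fin k) F) :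
    (xIminusAC A C).Unimodular ↔
      (Matrix.of fun (p : Fin k × Fin (n - k)) (j : Fin k) =>
        (C * A ^ (p.1 : ℕ)) p.2 j).rank = k := by
  classical
  set K := AlgebraicClosure F with hK
  set φ : F →+* K := algebraMap F K with hφ
  have hφinj : Function.Injective φ := φ.injective
  set A' : Matrix (Fin k) (Fin k) K := A.map φ with hA'
  set C' : Matrix (Fin (n - k)) (Fin k) K := C.map φ with hC'
  set P : Matrix (Fin k ⊕ Fin (n - k)) (Fin k) (Polynomial F) := xIminusAC A C with hP
  set Obs : Matrix (Fin k × Fin (n - k)) (Fin k) F :=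
    Matrix.of (fun (p : Fin k × Fin (n - k)) (j : Fin k) => (C * A ^ (p.1 : ℕ)) p.2 j) with hObs
  set ObsK : Matrix (Fin k × Fin (n - k)) (Fin k) K := Obs.map φ with hObsK
  -- evaluation of P at a point of K
  have hPmap : ∀ l : K, P.map (aeval l : Polynomial F →ₐ[F] K) =
      Matrix.of (fun i j => Sum.elim (fun i' => (if i' = j then l else 0) - A' i' j)
        (fun i'' => - C' i'' j) i) := by
    intro l
    funext i j
    cases i with
    | inl i' => simp [hP, xIminusAC, Matrix.map_apply, apply_ite, hA', hφ, Algebra.algebraMap_eq_smul_one]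
    | inr i'' => simp [hP, xIminusAC, Matrix.map_apply, hC', hφ, Algebra.algebraMap_eq_smul_one]
  -- kernel description of the evaluated matrix
  have hkerP : ∀ (l : K) (v : Fin k → K),
      (P.map (aeval l : Polynomial F →ₐ[F] K)) *ᵥ v = 0 ↔
      (A' *ᵥ v = l • v ∧ C' *ᵥ v = 0) := by
    intro l v
    rw [hPmap l]
    constructor
    · intro h
      constructor
      · funext i
        have h1 := congrFun h (Sum.inl i)
        simp only [Matrix.mulVec, dotProduct, Matrix.of_apply, Sum.elim_inl,
          Pi.zero_apply, sub_mul, Finset.sum_sub_distrib, ite_mul, zero_mul,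
          Finset.sum_ite_eq, Finset.mem_univ, if_true] at h1
        have := sub_eq_zero.mp h1
        simpa [Matrix.mulVec, dotProduct] using this.symm
      · funext i
        have h1 := congrFun h (Sum.inr i)
        simp only [Matrix.mulVec, dotProduct, Matrix.of_apply, Sum.elim_inr,
          Pi.zero_apply, neg_mul, Finset.sum_neg_distrib, neg_eq_zero] at h1
        have h1' : -∑ x, C' i x * v x = 0 := by
          rw [← Finset.sum_neg_distrib]
          exact Eq.trans (Finset.sum_congr rfl fun x _ => (neg_mul (C' i x) (v x)).symm) h1
        simpa [Matrix.mulVec, dotProduct] using neg_eq_zero.mp h1'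
    · rintro ⟨h1, h2⟩
      funext i
      cases i with
      | inl i =>
        have := congrFun h1 i
        simp only [Matrix.mulVec, dotProduct, Pi.smul_apply, smul_eq_mul] at this
        simp only [Matrix.mulVec, dotProduct, Matrix.of_apply, Sum.elim_inl,
          Pi.zero_apply, sub_mul, Finset.sum_sub_distrib, ite_mul, zero_mul,
          Finset.sum_ite_eq, Finset.mem_univ, if_true]
        rw [this]
        ring
      | inr i =>
        have := congrFun h2 i
        simp only [Matrix.mulVec, dotProduct, Pi.zero_apply] at this
        simp only [Matrix.mulVec, dotProduct, Matrix.of_apply, Sum.elim_inr,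
          Pi.zero_apply, neg_mul, Finset.sum_neg_distrib, neg_eq_zero]
        refine Eq.trans (b := ∑ x, -(C' i x * v x))
          (Finset.sum_congr rfl fun x _ => neg_mul (C' i x) (v x)) ?_
        rw [Finset.sum_neg_distrib, this, neg_zero]
  -- minors commute with evaluation
  have hminor : ∀ (l : K) (f : Fin k → Fin k ⊕ Fin (n - k)),
      ((P.map (aeval l : Polynomial F →ₐ[F] K)).submatrix f id).det
        = aeval l ((P.submatrix f id).det) := by
    intro l f
    rw [show (P.map (aeval l : Polynomial F →ₐ[F] K)).submatrix f id
        = (P.submatrix f id).map (aeval l : Polynomial F →ₐ[F] K) from rfl]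
    exact ((aeval l : Polynomial F →ₐ[F] K).map_det _).symm
  -- Step 1 : unimodularity ↔ pointwise full rank over K
  have step1 : P.Unimodular ↔
      ∀ l : K, ∃ f : Fin k → Fin k ⊕ Fin (n - k), Function.Injective f ∧
        ((P.map (aeval l : Polynomial F →ₐ[F] K)).submatrix f id).det ≠ 0 := by
    constructor
    · intro hU l
      by_contra hcon
      push_neg at hcon
      have hdvd : ∀ f : Fin k → Fin k ⊕ Fin (n - k), Function.Injective f →
          minpoly F l ∣ (P.submatrix f id).det := by
        intro f hf
        apply minpoly.dvd
        rw [← hminor l f]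
        exact hcon f hf
      exact minpoly.not_isUnit F l (hU _ hdvd)
    · intro hpt g hg
      by_contra hgu
      rcases eq_or_ne g 0 with rfl | hg0
      · obtain ⟨f, hf, hdet⟩ := hpt 0
        apply hdet
        rw [hminor]
        have : (P.submatrix f id).det = 0 := zero_dvd_iff.mp (hg f hf)
        rw [this, map_zero]
      · have hdeg : (g.map φ).degree ≠ 0 := by
          rw [Polynomial.degree_map]
          intro hc
          exact hgu (Polynomial.isUnit_iff_degree_eq_zero.mpr hc)
        obtain ⟨z, hz⟩ := IsAlgClosed.exists_root (g.map φ) hdeg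
        obtain ⟨f, hf, hdet⟩ := hpt z
        apply hdet
        rw [hminor]
        obtain ⟨h, hh⟩ := hg f hf
        rw [hh, _root_.map_mul]
        have : aeval z g = 0 := by
          rwa [Polynomial.aeval_def, ← Polynomial.eval_map]
        rw [this, zero_mul]
  -- Step 2 : mapped observability matrix
  have hObsmap : ∀ (p : Fin k × Fin (n - k)) (j : Fin k), ObsK p j = (C' * A' ^ (p.1 : ℕ)) p.2 j := by
    intro p j
    have : (C * A ^ (p.1 : ℕ)).map φ = C' * A' ^ (p.1 : ℕ) := by
      rw [Matrix.map_mul, hA', hC']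
      congr 1
      rw [← RingHom.mapMatrix_apply, ← RingHom.mapMatrix_apply, map_pow]
    rw [hObsK, hObs]
    calc φ ((C * A ^ (p.1 : ℕ)) p.2 j) = ((C * A ^ (p.1 : ℕ)).map φ) p.2 j := rfl
      _ = (C' * A' ^ (p.1 : ℕ)) p.2 j := by rw [this]
  -- kernel of ObsK
  have hkerObsK : ∀ v : Fin k → K, ObsK *ᵥ v = 0 ↔
      ∀ j : Fin k, (C' * A' ^ (j : ℕ)) *ᵥ v = 0 := by
    intro v
    constructor
    · intro h j
      funext i
      have := congrFun h (j, i)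
      simp only [Matrix.mulVec, dotProduct, Pi.zero_apply] at this ⊢
      rw [← this]
      exact Finset.sum_congr rfl fun x _ => by rw [hObsmap (j, i) x]
    · intro h
      funext p
      have := congrFun (h p.1) p.2
      simp only [Matrix.mulVec, dotProduct, Pi.zero_apply] at this ⊢
      rw [← this]
      exact Finset.sum_congr rfl fun x _ => by rw [hObsmap p x]
  -- chain everything
  rw [step1, PBH.rank_eq_iff_ker]
  constructor
  · intro hpt v hv
    -- transfer to K
    have hkerK : ∀ w : Fin k → K, ObsK *ᵥ w = 0 → w = 0 := by
      intro w hw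
      rw [hkerObsK] at hw
      refine (PBH.pbh_aux A' C').mp ?_ w hw
      intro lam u hAu hCu
      have := (hkerP lam u).mpr ⟨hAu, hCu⟩
      exact PBH.mulVec_eq_zero_of_det _ (hpt lam) u this
    -- back to F via a nonzero minor
    obtain ⟨f, hf, hdet⟩ := PBH.exists_det_ne_zero_of_ker ObsK hkerK
    have hdetF : (Obs.submatrix f id).det ≠ 0 := by
      intro hc
      apply hdet
      rw [show (ObsK.submatrix f id) = (Obs.submatrix f id).map φ from rfl,
        ← RingHom.mapMatrix_apply, ← RingHom.map_det, hc, map_zero]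
    exact PBH.mulVec_eq_zero_of_det Obs ⟨f, hf, hdetF⟩ v hv
  · intro hkerF l
    apply PBH.exists_det_ne_zero_of_ker
    intro v hv
    rw [hkerP] at hv
    have hRHS : ∀ w : Fin k → K, (∀ j : Fin k, (C' * A' ^ (j : ℕ)) *ᵥ w = 0) → w = 0 := by
      intro w hw
      have hwK : ObsK *ᵥ w = 0 := (hkerObsK w).mpr hw
      obtain ⟨f, hf, hdetF⟩ := PBH.exists_det_ne_zero_of_ker Obs hkerF
      have hdetK : ((ObsK).submatrix f id).det ≠ 0 := by
        rw [show (ObsK.submatrix f id) = (Obs.submatrix f id).map φ from rfl,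
          ← RingHom.mapMatrix_apply, ← RingHom.map_det]
        intro hc
        exact hdetF (hφinj (by rwa [map_zero]))
      exact PBH.mulVec_eq_zero_of_det ObsK ⟨f, hf, hdetK⟩ w hwK
    exact (PBH.pbh_aux A' C').mpr hRHS l v hv.1 hv.2
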